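/- Write a = H'(2T/3 − η) and b = H'(T/3 + η). Using the T-periodicity of H, the eigenvalues of the Jacobian J3(2T/3 − η, T/3 + η) are λ1 = −a − b and λ2 = −(1 − α)·b − α·a. Assume a + b > 0 and a ≠ b, and set α_max = b/(b − a). If (α_max − α)·(b − a) > 0 then λ1 < 0 and λ2 < 0, so (2T/3 − η, T/3 + η) is a stable fixed point; if (α_max − α)·(b − a) < 0 then λ1 < 0 < λ2, so (2T/3 − η, T/3 + η) is a saddle point. -/

import Mathlib

open Matrix Polynomial

/-- the eigenvalues of `J3(2T/3 − η, T/3 + η)` are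
`λ1 = −a − b` and `λ2 = −(1 − α)·b − α·a`; stability criteria via `α_max`. -/
theorem stmt_6 (T : ℝ) (hT : 0 < T) (H H' : ℝ → ℝ)
    (hH' : ∀ x : ℝ, HasDerivAt H (H' x) x)
    (hper : ∀ θ : ℝ, H (θ + T) = H θ)
    (η : ℝ) (hη : η ∈ Set.Icc (0 : ℝ) (T / 6))
    (α : ℝ) (hα0 : 0 < α) (hα1 : α < 1)
    (J3 : ℝ → ℝ → Matrix (Fin 2) (Fin 2) ℝ)
    (hJ3 : ∀ θ1 θ2 : ℝ, J3 θ1 θ2 =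
      -!![H' (-θ1) + α * H' θ1, (1 - α) * H' θ2;
          α * H' θ1, H' (-θ2) + (1 - α) * H' θ2])
    (a b : ℝ) (ha : a = H' (2 * T / 3 - η)) (hb : b = H' (T / 3 + η))
    (hab : 0 < a + b) (hne : a ≠ b)
    (αmax : ℝ) (hαmax : αmax = b / (b - a)) :
    (J3 (2 * T / 3 - η) (T / 3 + η)).charpoly =
      (Polynomial.X - Polynomial.C (-a - b)) *
      (Polynomial.X - Polynomial.C (-(1 - α) * b - α * a)) ∧
    (0 < (αmax - α) * (b - a) → (-a - b < 0 ∧ -(1 - α) * b - α * a < 0)) ∧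
    ((αmax - α) * (b - a) < 0 → (-a - b < 0 ∧ 0 < -(1 - α) * b - α * a)) := by
  have hH'per : ∀ x : ℝ, H' (x + T) = H' x := by
    intro x
    have h1 : HasDerivAt (fun y => H (y + T)) (H' (x + T)) x := by
      exact HasDerivAt.comp_add_const x T (hH' (x + T))
    have h2 : (fun y : ℝ => H (y + T)) = H := funext hper
    rw [h2] at h1
    exact h1.unique (hH' x)
  have e1 : H' (-(2 * T / 3 - η)) = b := by
    rw [hb, ← hH'per (-(2 * T / 3 - η))]
    congr 1; ring
  have e2 : H' (-(T / 3 + η)) = a := by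
    rw [ha, ← hH'per (-(T / 3 + η))]
    congr 1; ring
  have hM : J3 (2 * T / 3 - η) (T / 3 + η) =
      !![-(b + α * a), -((1 - α) * b);
         -(α * a), -(a + (1 - α) * b)] := by
    rw [hJ3, e1, e2, ← ha, ← hb]
    ext i j
    fin_cases i <;> fin_cases j <;> simp [Matrix.neg_apply] <;> ring
  have hcp : (J3 (2 * T / 3 - η) (T / 3 + η)).charpoly =
      (Polynomial.X - Polynomial.C (-a - b)) *
      (Polynomial.X - Polynomial.C (-(1 - α) * b - α * a)) := by
    rw [hM, Matrix.charpoly, Matrix.det_fin_two]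
    simp [Matrix.charmatrix_apply, Matrix.diagonal, map_add, _root_.map_mul, map_sub, map_neg, _root_.map_one]
    ring
  have hba : b - a ≠ 0 := sub_ne_zero.mpr (Ne.symm hne)
  have hkey : (αmax - α) * (b - a) = -(-(1 - α) * b - α * a) := by
    rw [hαmax]
    field_simp
    ring
  refine ⟨hcp, fun h => ⟨by linarith, by linarith⟩, fun h => ⟨by linarith, by linarith⟩⟩
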